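/- Regret decomposition into quantization and spacing losses: let ŷ_1,...,ŷ_L be predictions and x_t = ŷ_t + (P_t Δ + δ_t)α for integers P_t with ∑ P_t = 0, reals δ_t, and constants Δ, α > 0. Then the regret R = (1/L)∑(x_t-ŷ_t)^2 - (1/L)∑(x_t-x̄)^2 satisfies R ≤ (1/L)∑ δ_t^2 α^2 − (2Δα/L)∑ P_t ŷ_t, where x̄ is the empirical mean of the x_t. -/

import Mathlib

/-- Regret decomposition into quantization and spacing losses. -/
theorem regret_quantization_spacing (L : ℕ) (hL : 1 ≤ L) (y δ : Fin L → ℝ)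
    (P : Fin L → ℤ) (hP : ∑ t, P t = 0) (Δ α : ℝ) (hΔ : 0 < Δ) (hα : 0 < α)
    (x : Fin L → ℝ) (hx : ∀ t, x t = y t + ((P t : ℝ) * Δ + δ t) * α) :
    (1 / L) * ∑ t, (x t - y t) ^ 2 - (1 / L) * ∑ t, (x t - (∑ s, x s) / L) ^ 2
      ≤ (1 / L) * ∑ t, (δ t) ^ 2 * α ^ 2 - (2 * Δ * α / L) * ∑ t, (P t : ℝ) * y t := by
  have hL0 : (0:ℝ) < (L:ℝ) := by exact_mod_cast Nat.lt_of_lt_of_le Nat.zero_lt_one hL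
  set S : ℝ := ∑ t, (y t + δ t * α) with hSdef
  set A : ℝ := ∑ t, (x t - y t) ^ 2 with hA
  set B : ℝ := ∑ t, (x t) ^ 2 with hB
  set C : ℝ := ∑ t, (δ t) ^ 2 * α ^ 2 with hC
  set D : ℝ := ∑ t, (P t : ℝ) * y t with hD
  set Q : ℝ := ∑ t, (y t + δ t * α) ^ 2 with hQ
  have hPsum : ∑ t, (P t : ℝ) = 0 := by exact_mod_cast hP
  have hS : ∑ t, x t = S := by
    have h1 : ∀ t ∈ Finset.univ, x t = (y t + δ t * α) + (P t : ℝ) * (Δ * α) :=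
      fun t _ => by rw [hx t]; ring
    rw [Finset.sum_congr rfl h1, Finset.sum_add_distrib, ← Finset.sum_mul, hPsum]
    simp [hSdef]
  -- Jensen / Cauchy-Schwarz
  have hJ : S ^ 2 ≤ (L : ℝ) * Q := by
    have := sq_sum_le_card_mul_sum_sq (s := Finset.univ) (f := fun t => y t + δ t * α)
    simpa [hSdef, hQ] using this
  -- key pointwise combination
  have hcomb : A + 2 * Δ * α * D = B + C - Q := by
    have h2 : ∀ t ∈ Finset.univ,
        (x t - y t) ^ 2 + 2 * Δ * α * ((P t : ℝ) * y t)
          = (x t) ^ 2 + (δ t) ^ 2 * α ^ 2 - (y t + δ t * α) ^ 2 :=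
      fun t _ => by rw [hx t]; ring
    calc A + 2 * Δ * α * D
        = ∑ t, ((x t - y t) ^ 2 + 2 * Δ * α * ((P t : ℝ) * y t)) := by
          rw [Finset.sum_add_distrib, ← Finset.mul_sum]
      _ = ∑ t, ((x t) ^ 2 + (δ t) ^ 2 * α ^ 2 - (y t + δ t * α) ^ 2) :=
          Finset.sum_congr rfl h2
      _ = B + C - Q := by rw [Finset.sum_sub_distrib, Finset.sum_add_distrib]
  -- expand the variance sum
  have hE : ∑ t, (x t - (∑ s, x s) / L) ^ 2 = B - S ^ 2 / L := by
    have h3 : ∀ t ∈ Finset.univ,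
        (x t - (∑ s, x s) / L) ^ 2
          = (x t) ^ 2 - 2 * (S / L) * x t + (S / L) ^ 2 := fun t _ => by
      rw [hS]; ring
    rw [Finset.sum_congr rfl h3, Finset.sum_add_distrib, Finset.sum_sub_distrib,
      ← Finset.mul_sum, hS, Finset.sum_const, Finset.card_univ, Fintype.card_fin,
      nsmul_eq_mul]
    field_simp
    ring
  rw [hE]
  have hSQ : S ^ 2 / L ≤ Q := by
    rw [div_le_iff₀ hL0]
    nlinarith [hJ]
  have hmain : A - (B - S ^ 2 / L) ≤ C - 2 * Δ * α * D := by linarith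
  have hinv : (0:ℝ) ≤ 1 / (L:ℝ) := by positivity
  have := mul_le_mul_of_nonneg_left hmain hinv
  have e1 : (1 / (L:ℝ)) * (A - (B - S ^ 2 / L)) = (1/(L:ℝ)) * A - (1/(L:ℝ)) * (B - S^2/L) := by ring
  have e2 : (1 / (L:ℝ)) * (C - 2 * Δ * α * D) = (1/(L:ℝ)) * C - (2*Δ*α/(L:ℝ)) * D := by ring
  linarith [this, e1.ge, e2.le]
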